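/- For positive integers m, n, i, j with 1 ≤ i ≤ m and 1 ≤ j ≤ n, the number of pairs of non-intersecting monotone lattice paths in an m×n grid, the first from (1,1) to (i,n) and the second from (2,1) to (m,j), equals the determinant of the 2×2 matrix with entries [C(i+n-2, i-1), C(m+j-2, m-1); C(i+n-3, i-2), C(m+j-3, m-2)]. -/

import Mathlib

def IsStep (p q : ℕ × ℕ) : Prop := q = (p.1 + 1, p.2) ∨ q = (p.1, p.2 + 1)

def IsPath (a b c d : ℕ) (L : List (ℕ × ℕ)) : Prop :=
  L ≠ [] ∧ L.head? = some (a, b) ∧ L.getLast? = some (c, d) ∧ L.Chain' IsStep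

def binom (a b : ℤ) : ℤ := if 0 ≤ b ∧ b ≤ a then (a.toNat.choose b.toNat : ℤ) else 0

open List

lemma chain_step_get {L : List (ℕ×ℕ)} (hc : L.Chain' IsStep) {t : ℕ} (ht : t + 1 < L.length) :
    IsStep (L[t]'(by omega)) (L[t+1]'ht) := by
  have := List.isChain_iff_getElem.mp hc t (by omega)
  simpa [List.get_eq_getElem] using this

lemma diag_get {L : List (ℕ×ℕ)} (hc : L.Chain' IsStep) (t : ℕ) (ht : t < L.length) :
    (L[t]'ht).1 + (L[t]'ht).2
      = (L[0]'(by omega)).1 + (L[0]'(by omega)).2 + t := by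
  induction t with
  | zero => simp
  | succ s ih =>
    have hstep := chain_step_get hc ht
    have := ih (by omega)
    rcases hstep with h | h <;> rw [h] at * <;> simp at * <;> omega

lemma get_le_get {L : List (ℕ×ℕ)} (hc : L.Chain' IsStep) {s t : ℕ} (hst : s ≤ t)
    (ht : t < L.length) :
    (L[s]'(by omega)).1 ≤ (L[t]'ht).1 ∧ (L[s]'(by omega)).2 ≤ (L[t]'ht).2 := by
  induction t with
  | zero =>
    have : s = 0 := by omega
    subst this; simp
  | succ u ih =>
    rcases Nat.eq_or_lt_of_le hst with h | h
    · subst h; simp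
    · have h1 := ih (by omega) (by omega)
      have hstep := chain_step_get hc ht
      rcases hstep with h2 | h2 <;> rw [h2] <;> simp <;> omega

namespace IsPath

variable {a b c d : ℕ} {L : List (ℕ × ℕ)}

lemma length_pos (h : IsPath a b c d L) : 0 < L.length := List.length_pos_iff.mpr h.1

lemma getElem_zero (h : IsPath a b c d L) : L[0]'h.length_pos = (a, b) := by
  obtain ⟨hne, hh, -, -⟩ := h
  rw [List.head?_eq_head hne, List.head_eq_getElem] at hh
  exact (Option.some_injective _ hh)

lemma getElem_last (h : IsPath a b c d L) :
    L[L.length - 1]'(by have := h.length_pos; omega) = (c, d) := by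
  obtain ⟨hne, -, hl, -⟩ := h
  rw [List.getLast?_eq_getLast hne, List.getLast_eq_getElem hne] at hl
  exact Option.some_injective _ hl

lemma get_diag (h : IsPath a b c d L) (t : ℕ) (ht : t < L.length) :
    (L[t]'ht).1 + (L[t]'ht).2 = a + b + t := by
  have := diag_get h.2.2.2 t ht
  rw [h.getElem_zero] at this
  simpa using this

lemma length_eq (h : IsPath a b c d L) : a + b ≤ c + d ∧ L.length = c + d + 1 - (a + b) := by
  have hne : L ≠ [] := h.1
  have hlen : 0 < L.length := by cases L <;> simp_all
  have := h.get_diag (L.length - 1) (by omega)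
  rw [h.getElem_last] at this
  simp at this
  omega

lemma mem_bounds (h : IsPath a b c d L) {v : ℕ × ℕ} (hv : v ∈ L) :
    a ≤ v.1 ∧ b ≤ v.2 ∧ v.1 ≤ c ∧ v.2 ≤ d := by
  obtain ⟨t, ht, rfl⟩ := List.mem_iff_getElem.mp hv
  have hlen : 0 < L.length := by omega
  have h1 := get_le_get h.2.2.2 (Nat.zero_le t) ht
  have h2 := get_le_get h.2.2.2 (show t ≤ L.length - 1 by omega) (show L.length - 1 < L.length by omega)
  rw [h.getElem_zero] at h1
  rw [h.getElem_last] at h2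
  exact ⟨h1.1, h1.2, h2.1, h2.2⟩

lemma nodup (h : IsPath a b c d L) : L.Nodup := by
  rw [List.nodup_iff_injective_getElem]
  rintro ⟨s, hs⟩ ⟨t, ht⟩ he
  have h1 := h.get_diag s hs
  have h2 := h.get_diag t ht
  simp only at he
  rw [he] at h1
  simp only [Fin.mk.injEq]
  omega

end IsPath

def pathSet (a b c d : ℕ) : Set (List (ℕ × ℕ)) := {L | IsPath a b c d L}

lemma pathSet_eq_empty {a b c d : ℕ} (h : ¬(a ≤ c ∧ b ≤ d)) : pathSet a b c d = ∅ := by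
  ext L
  simp only [pathSet, Set.mem_setOf_eq, Set.mem_empty_iff_false, iff_false]
  intro hL
  have hmem : (a, b) ∈ L := by
    rw [List.mem_iff_getElem]
    exact ⟨0, hL.length_pos, hL.getElem_zero⟩
  have hmem2 : (c, d) ∈ L := by
    rw [List.mem_iff_getElem]
    exact ⟨L.length - 1, by have := hL.length_pos; omega, hL.getElem_last⟩
  have := hL.mem_bounds hmem2
  exact h ⟨this.1, this.2.1⟩

lemma pathSet_subset_singleton {a b c d : ℕ} (h : c + d ≤ a + b) :
    pathSet a b c d ⊆ {[(a, b)]} := by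
  intro L hL
  have hlen := hL.length_eq
  have h1 : L.length = 1 := by omega
  obtain ⟨x, rfl⟩ := List.length_eq_one_iff.mp h1
  have hx : x = (a, b) := by simpa using hL.getElem_zero
  exact hx ▸ rfl

lemma isPath_singleton {a b : ℕ} : IsPath a b a b [(a, b)] :=
  ⟨by simp, rfl, rfl, List.isChain_singleton _⟩

lemma getLast?_cons_ne {α : Type*} {x : α} {L : List α} (h : L ≠ []) :
    (x :: L).getLast? = L.getLast? := by
  cases L with
  | nil => simp_all
  | cons y t => simp

lemma pathSet_self {a b : ℕ} : pathSet a b a b = {[(a, b)]} := by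
  refine subset_antisymm (pathSet_subset_singleton le_rfl) ?_
  rintro L rfl
  exact isPath_singleton

lemma pathSet_cons {a b c d : ℕ} (h : a + b < c + d) :
    pathSet a b c d =
      (fun L => (a, b) :: L) '' (pathSet (a+1) b c d ∪ pathSet a (b+1) c d) := by
  ext L
  constructor
  · intro hL
    have hlen := hL.length_eq
    have h2 : 2 ≤ L.length := by omega
    obtain ⟨x, L', rfl⟩ := List.exists_cons_of_ne_nil hL.1
    have hx : x = (a, b) := by
      have := hL.getElem_zero; simpa using this
    subst hx
    have hL' : L' ≠ [] := by rintro rfl; simp at h2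
    obtain ⟨-, -, hlast, hchain⟩ := hL
    have hchain := List.isChain_cons.mp hchain
    have hstep : IsStep (a, b) (L'.head hL') :=
      hchain.1 _ (by simp [List.head?_eq_head hL'])
    have hlast' : L'.getLast? = some (c, d) := by
      rwa [getLast?_cons_ne hL'] at hlast
    refine ⟨L', ?_, rfl⟩
    rcases hstep with hs | hs
    · left
      exact ⟨hL', by rw [List.head?_eq_head hL', hs], hlast', hchain.2⟩
    · right
      exact ⟨hL', by rw [List.head?_eq_head hL', hs], hlast', hchain.2⟩
  · rintro ⟨L', hL', rfl⟩
    have key : ∀ a' b', L' ∈ pathSet a' b' c d → IsStep (a, b) (a', b') →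
        IsPath a b c d ((a, b) :: L') := by
      rintro a' b' ⟨hne, hh, hlast, hchain⟩ hstep
      refine ⟨by simp, by simp, ?_, ?_⟩
      · rwa [getLast?_cons_ne hne]
      · refine List.isChain_cons.mpr ?_
        refine ⟨?_, hchain⟩
        intro y hy
        rw [hh] at hy
        cases hy
        exact hstep
    rcases hL' with hL' | hL'
    · exact key _ _ hL' (Or.inl rfl)
    · exact key _ _ hL' (Or.inr rfl)

lemma pathSet_finite (a b c d : ℕ) : (pathSet a b c d).Finite := by
  suffices H : ∀ k a b, c + d ≤ a + b + k → (pathSet a b c d).Finite from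
    H (c + d) a b (by omega)
  intro k
  induction k with
  | zero =>
    intro a b hab
    exact (Set.finite_singleton _).subset (pathSet_subset_singleton (by omega))
  | succ k ih =>
    intro a b hab
    by_cases hle : c + d ≤ a + b
    · exact (Set.finite_singleton _).subset (pathSet_subset_singleton hle)
    · rw [pathSet_cons (by omega)]
      exact (((ih (a+1) b (by omega)).union (ih a (b+1) (by omega))).image _)

lemma pathSet_disjoint {a b c d : ℕ} :
    Disjoint (pathSet (a+1) b c d) (pathSet a (b+1) c d) := by
  rw [Set.disjoint_left]
  intro L h1 h2
  have e1 := h1.getElem_zero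
  have e2 := h2.getElem_zero
  rw [e1] at e2
  simp at e2

lemma pathSet_ncard (a b c d : ℕ) :
    (pathSet a b c d).ncard =
      if a ≤ c ∧ b ≤ d then ((c - a) + (d - b)).choose (c - a) else 0 := by
  suffices H : ∀ k a b, c + d ≤ a + b + k → (pathSet a b c d).ncard =
      (if a ≤ c ∧ b ≤ d then ((c - a) + (d - b)).choose (c - a) else 0) from
    H (c + d) a b (by omega)
  intro k
  induction k with
  | zero =>
    intro a b hab
    by_cases hc : a ≤ c ∧ b ≤ d
    · have : a = c ∧ b = d := by omega
      obtain ⟨rfl, rfl⟩ := this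
      rw [pathSet_self]
      simp
    · rw [pathSet_eq_empty hc]
      simp [hc]
  | succ k ih =>
    intro a b hab
    by_cases hc : a ≤ c ∧ b ≤ d
    · by_cases hlt : a + b < c + d
      · rw [pathSet_cons hlt, Set.ncard_image_of_injective _ (fun x y => by simp),
          Set.ncard_union_eq pathSet_disjoint (pathSet_finite _ _ _ _) (pathSet_finite _ _ _ _),
          ih (a+1) b (by omega), ih a (b+1) (by omega)]
        rcases Nat.lt_or_ge a c with hac | hac
        · rcases Nat.lt_or_ge b d with hbd | hbd
          · obtain ⟨p, hp⟩ : ∃ p, c - a = p + 1 := ⟨c - a - 1, by omega⟩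
            obtain ⟨q, hq⟩ : ∃ q, d - b = q + 1 := ⟨d - b - 1, by omega⟩
            have h1 : c - (a+1) = p := by omega
            have h2 : d - (b+1) = q := by omega
            simp only [if_pos (show a + 1 ≤ c ∧ b ≤ d by omega),
              if_pos (show a ≤ c ∧ b + 1 ≤ d by omega), if_pos hc, h1, h2, hp, hq]
            have e1 : p + (q + 1) = p + q + 1 := by omega
            have e2 : p + 1 + q = p + q + 1 := by omega
            have e3 : p + 1 + (q + 1) = p + q + 1 + 1 := by omega
            rw [e1, e2, e3]
            exact (Nat.choose_succ_succ _ _).symm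
          · -- b = d, so paths must go straight down
            have hbd' : b = d := by omega
            subst hbd'
            have h0 : ¬(a ≤ c ∧ b + 1 ≤ b) := by omega
            simp only [if_pos (show a + 1 ≤ c ∧ b ≤ b by omega), if_neg h0, if_pos hc]
            simp [Nat.sub_self, Nat.choose_self]
        · have hac' : a = c := by omega
          subst hac'
          have hbd : b < d := by omega
          have h0 : ¬(a + 1 ≤ a ∧ b ≤ d) := by omega
          simp only [if_neg h0, if_pos (show a ≤ a ∧ b + 1 ≤ d by omega), if_pos hc]
          simp [Nat.sub_self]
      · have : a = c ∧ b = d := by omega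
        obtain ⟨rfl, rfl⟩ := this
        rw [pathSet_self]
        simp
    · rw [pathSet_eq_empty hc]
      simp [hc]

section Swap

lemma takeWhile_dropWhile_spec {α : Type*} (p : α → Bool) (A D : List α)
    (hA : ∀ x ∈ A, p x = true) (hD : ∀ h : D ≠ [], p (D.head h) = false) :
    (A ++ D).takeWhile p = A ∧ (A ++ D).dropWhile p = D := by
  cases D with
  | nil =>
    simp only [List.append_nil]
    constructor
    · exact List.takeWhile_eq_self_iff.mpr hA
    · exact List.dropWhile_eq_nil_iff.mpr hA
  | cons v D' =>
    have hv : p v = false := hD (by simp)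
    rw [List.takeWhile_append_of_pos hA, List.dropWhile_append_of_pos hA]
    simp [List.takeWhile_cons, List.dropWhile_cons, hv]

def firstMeet (P Q : List (ℕ × ℕ)) : ℕ × ℕ :=
  ((P.dropWhile (fun x => !decide (x ∈ Q))).head?).getD (0, 0)

def swapPair (PQ : List (ℕ × ℕ) × List (ℕ × ℕ)) : List (ℕ × ℕ) × List (ℕ × ℕ) :=
  (PQ.1.takeWhile (fun x => !decide (x ∈ PQ.2))
      ++ PQ.2.dropWhile (fun y => !decide (y = firstMeet PQ.1 PQ.2)),
   PQ.2.takeWhile (fun y => !decide (y = firstMeet PQ.1 PQ.2))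
      ++ PQ.1.dropWhile (fun x => !decide (x ∈ PQ.2)))

lemma head?_append_left {α : Type*} {A B : List α} (h : A ≠ []) :
    (A ++ B).head? = A.head? := by
  cases A with
  | nil => simp_all
  | cons x t => simp

lemma getLast?_append_right {α : Type*} {A B : List α} (h : B ≠ []) :
    (A ++ B).getLast? = B.getLast? := by
  rw [List.getLast?_append]
  cases hx : B.getLast? with
  | none => exact absurd (List.getLast?_eq_none_iff.mp hx) h
  | some y => simp

lemma swapPair_spec {a b c d e f g h' : ℕ} {P Q : List (ℕ × ℕ)}
    (hP : IsPath a b c d P) (hQ : IsPath e f g h' Q) (hint : ∃ v ∈ P, v ∈ Q) :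
    IsPath a b g h' (swapPair (P, Q)).1 ∧ IsPath e f c d (swapPair (P, Q)).2 ∧
    (∃ v ∈ (swapPair (P, Q)).1, v ∈ (swapPair (P, Q)).2) ∧
    swapPair (swapPair (P, Q)) = (P, Q) := by
  classical
  set p : ℕ × ℕ → Bool := fun x => !decide (x ∈ Q) with hp
  have hPsplit : P.takeWhile p ++ P.dropWhile p = P := List.takeWhile_append_dropWhile
  set A := P.takeWhile p with hAdef
  set C := P.dropWhile p with hCdef
  have hCne : C ≠ [] := by
    intro h0
    obtain ⟨w, hwP, hwQ⟩ := hint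
    have := List.dropWhile_eq_nil_iff.mp h0 w hwP
    simp [hp] at this
    exact this hwQ
  set v := C.head hCne with hvdef
  have hv? : C.head? = some v := List.head?_eq_head hCne
  have hvC : v ∈ C := List.head_mem hCne
  have hvP : v ∈ P := by rw [← hPsplit]; exact List.mem_append_right A hvC
  have hvQ : v ∈ Q := by
    have := List.head_dropWhile_not p (l := P) (by rw [← hCdef]; exact hCne)
    simp only [hp, Bool.not_eq_false', decide_eq_true_eq] at this
    simpa [hvdef, hCdef] using this
  have hfm : firstMeet P Q = v := by
    simp only [firstMeet, ← hp, ← hCdef, hv?, Option.getD_some]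
  set q : ℕ × ℕ → Bool := fun y => !decide (y = v) with hq
  have hQsplit : Q.takeWhile q ++ Q.dropWhile q = Q := List.takeWhile_append_dropWhile
  set B := Q.takeWhile q with hBdef
  set D := Q.dropWhile q with hDdef
  have hDne : D ≠ [] := by
    intro h0
    have := List.dropWhile_eq_nil_iff.mp h0 v hvQ
    simp [hq] at this
  have hheadD : D.head hDne = v := by
    have := List.head_dropWhile_not q (l := Q) (by rw [← hDdef]; exact hDne)
    simp only [hq, Bool.not_eq_false', decide_eq_true_eq] at this
    simpa [hDdef] using this
  have hD? : D.head? = some v := by rw [List.head?_eq_head hDne, hheadD]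
  have hvD : v ∈ D := by rw [← hheadD]; exact List.head_mem hDne
  have hA_not : ∀ x ∈ A, x ∉ Q := by
    intro x hx
    have := List.mem_takeWhile_imp hx
    simp [hp] at this
    exact this
  have hB_ne : ∀ y ∈ B, y ≠ v := by
    intro y hy
    have := List.mem_takeWhile_imp hy
    simp [hq] at this
    exact this
  have hswap : swapPair (P, Q) = (A ++ D, B ++ C) := by
    simp only [swapPair, hfm]; rfl
  have hPchain : List.Chain' IsStep (A ++ C) := by rw [hPsplit]; exact hP.2.2.2
  have hQchain : List.Chain' IsStep (B ++ D) := by rw [hQsplit]; exact hQ.2.2.2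
  obtain ⟨hAchain, hCchain, hACglue⟩ := List.isChain_append.mp hPchain
  obtain ⟨hBchain, hDchain, hBDglue⟩ := List.isChain_append.mp hQchain
  have hADchain : List.Chain' IsStep (A ++ D) := by
    refine List.isChain_append.mpr ⟨hAchain, hDchain, ?_⟩
    intro x hx y hy
    rw [hD?] at hy
    cases hy
    exact hACglue x hx v (by rw [hv?]; rfl)
  have hBCchain : List.Chain' IsStep (B ++ C) := by
    refine List.isChain_append.mpr ⟨hBchain, hCchain, ?_⟩
    intro x hx y hy
    rw [hv?] at hy
    cases hy
    exact hBDglue x hx v (by rw [hD?]; rfl)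
  have hADpath : IsPath a b g h' (A ++ D) := by
    refine ⟨by simp [hDne], ?_, ?_, hADchain⟩
    · by_cases hAne : A = []
      · rw [hAne] at hPsplit ⊢
        have hCP : C = P := by simpa using hPsplit
        rw [List.nil_append, hD?, ← hP.2.1, ← hCP, hv?]
      · rw [head?_append_left hAne, ← hP.2.1, ← hPsplit, head?_append_left hAne]
    · rw [getLast?_append_right hDne, ← hQ.2.2.1, ← hQsplit, getLast?_append_right hDne]
  have hBCpath : IsPath e f c d (B ++ C) := by
    refine ⟨by simp [hCne], ?_, ?_, hBCchain⟩
    · by_cases hBne : B = []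
      · rw [hBne] at hQsplit ⊢
        have hDQ : D = Q := by simpa using hQsplit
        rw [List.nil_append, hv?, ← hQ.2.1, ← hDQ, ← hheadD, List.head?_eq_head]
      · rw [head?_append_left hBne, ← hQ.2.1, ← hQsplit, head?_append_left hBne]
    · rw [getLast?_append_right hCne, ← hP.2.2.1, ← hPsplit, getLast?_append_right hCne]
  have hAC_disj : List.Disjoint A C := by
    have hnd : (A ++ C).Nodup := by rw [hPsplit]; exact hP.nodup
    exact List.disjoint_of_nodup_append hnd
  have hBQ : ∀ y ∈ B, y ∈ Q := fun y hy => (List.takeWhile_sublist q).mem hy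
  obtain ⟨w1, w2⟩ := takeWhile_dropWhile_spec (fun x => !decide (x ∈ B ++ C)) A D
    (by
      intro x hx
      simp only [Bool.not_eq_true', decide_eq_false_iff_not, List.mem_append]
      rintro (hxB | hxC)
      · exact hA_not x hx (hBQ x hxB)
      · exact hAC_disj hx hxC)
    (by
      intro hh
      rw [hheadD]
      simp only [Bool.not_eq_false', decide_eq_true_eq, List.mem_append]
      exact Or.inr hvC)
  obtain ⟨w3, w4⟩ := takeWhile_dropWhile_spec (fun y => !decide (y = v)) B C
    (by
      intro y hy
      simpa using hB_ne y hy)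
    (by
      intro hh
      have : C.head hh = v := hvdef.symm
      simp [this])
  have hfm2 : firstMeet (A ++ D) (B ++ C) = v := by
    rw [firstMeet, w2, hD?, Option.getD_some]
  refine ⟨by rw [hswap]; exact hADpath, by rw [hswap]; exact hBCpath,
    ⟨v, by rw [hswap]; exact List.mem_append_right A hvD,
      by rw [hswap]; exact List.mem_append_right B hvC⟩, ?_⟩
  rw [hswap]
  show (_, _) = (P, Q)
  simp only [swapPair, hfm2]
  rw [w1, w4, w3, w2]
  exact Prod.ext (by simpa using hPsplit) (by simpa using hQsplit)

lemma getD_eq_getElem' {α : Type*} (L : List α) (x : α) {t : ℕ} (ht : t < L.length) :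
    L.getD t x = L[t]'ht := by
  simp [List.getD_eq_getElem?_getD, List.getElem?_eq_getElem ht]

lemma getElem_eq_of_eq {α : Type*} (L : List α) {s t : ℕ} (h : s = t) (hs : s < L.length) :
    L[s]'hs = L[t]'(h ▸ hs) := by subst h; rfl

lemma nat_ivt (f g : ℕ → ℕ) (K : ℕ) (h0 : f 0 ≤ g 0) (hK : g K ≤ f K)
    (hf : ∀ t < K, f (t+1) ≤ f t + 1) (hg : ∀ t < K, g t ≤ g (t+1)) :
    ∃ t ≤ K, f t = g t := by
  induction K with
  | zero => exact ⟨0, le_rfl, le_antisymm h0 hK⟩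
  | succ K ih =>
    by_cases h : g K ≤ f K
    · obtain ⟨t, ht, he⟩ := ih h (fun t ht => hf t (by omega)) (fun t ht => hg t (by omega))
      exact ⟨t, by omega, he⟩
    · push_neg at h
      have h1 := hf K (by omega)
      have h2 := hg K (by omega)
      exact ⟨K + 1, le_rfl, by omega⟩

lemma crossing {m j i n : ℕ} {P Q : List (ℕ × ℕ)} (hP : IsPath 1 1 m j P)
    (hQ : IsPath 2 1 i n Q) (him : i ≤ m) (hjn : j ≤ n) : ∃ v ∈ P, v ∈ Q := by
  have hPlen := hP.length_eq
  have hQlen := hQ.length_eq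
  have hi2 : 2 ≤ i := by
    have hmem : (i, n) ∈ Q := by
      rw [List.mem_iff_getElem]
      exact ⟨Q.length - 1, by have := hQ.length_pos; omega, hQ.getElem_last⟩
    exact (hQ.mem_bounds hmem).1
  have hj1 : 1 ≤ j := by
    have hmem : (m, j) ∈ P := by
      rw [List.mem_iff_getElem]
      exact ⟨P.length - 1, by have := hP.length_pos; omega, hP.getElem_last⟩
    exact (hP.mem_bounds hmem).2.1
  have hPl : P.length = m + j - 1 := by omega
  have hQl : Q.length = i + n - 2 := by omega
  set K := min (m + j) (i + n) - 3 with hK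
  set f : ℕ → ℕ := fun u => (P.getD (u + 1) (0, 0)).1 with hf
  set g : ℕ → ℕ := fun u => (Q.getD u (0, 0)).1 with hg
  have hPb : ∀ u ≤ K, u + 1 < P.length := by intro u hu; omega
  have hQb : ∀ u ≤ K, u < Q.length := by intro u hu; omega
  have hfval : ∀ u (hu : u ≤ K), f u = (P[u+1]'(hPb u hu)).1 := by
    intro u hu; rw [hf]; simp only; rw [getD_eq_getElem' P _ (hPb u hu)]
  have hgval : ∀ u (hu : u ≤ K), g u = (Q[u]'(hQb u hu)).1 := by
    intro u hu; rw [hg]; simp only; rw [getD_eq_getElem' Q _ (hQb u hu)]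
  have memP : ∀ u (hu : u ≤ K), P[u+1]'(hPb u hu) ∈ P := by
    intro u hu; exact List.getElem_mem _
  have memQ : ∀ u (hu : u ≤ K), Q[u]'(hQb u hu) ∈ Q := by
    intro u hu; exact List.getElem_mem _
  have h0 : f 0 ≤ g 0 := by
    rw [hfval 0 (by omega), hgval 0 (by omega)]
    have hd := hP.get_diag (0+1) (hPb 0 (by omega))
    have hb := hP.mem_bounds (memP 0 (by omega))
    have h2 : (Q[0]'(hQb 0 (by omega))).1 = 2 := by rw [hQ.getElem_zero]
    omega
  have hKK : g K ≤ f K := by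
    rw [hfval K le_rfl, hgval K le_rfl]
    rcases le_or_gt (i + n) (m + j) with hc | hc
    · have hK1 : K = i + n - 3 := by omega
      have hQK : K = Q.length - 1 := by omega
      have hgK : (Q[K]'(hQb K le_rfl)).1 = i := by
        rw [getElem_eq_of_eq Q hQK, hQ.getElem_last]
      rw [hgK]
      have hd := hP.get_diag (K + 1) (hPb K le_rfl)
      have hb := hP.mem_bounds (memP K le_rfl)
      omega
    · have hK1 : K = m + j - 3 := by omega
      have hPK : K + 1 = P.length - 1 := by omega
      have hfK : (P[K+1]'(hPb K le_rfl)).1 = m := by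
        rw [getElem_eq_of_eq P hPK, hP.getElem_last]
      have hb := hQ.mem_bounds (memQ K le_rfl)
      omega
  have hstepf : ∀ t < K, f (t + 1) ≤ f t + 1 := by
    intro t ht
    rw [hfval t (by omega), hfval (t+1) (by omega)]
    have := chain_step_get hP.2.2.2 (hPb (t+1) (by omega))
    rcases this with h | h <;> rw [h] <;> simp
  have hstepg : ∀ t < K, g t ≤ g (t + 1) := by
    intro t ht
    rw [hgval t (by omega), hgval (t+1) (by omega)]
    have := chain_step_get hQ.2.2.2 (hQb (t+1) (by omega))
    rcases this with h | h <;> rw [h] <;> simp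
  obtain ⟨t, ht, he⟩ := nat_ivt f g K h0 hKK hstepf hstepg
  refine ⟨P[t+1]'(hPb t ht), memP t ht, ?_⟩
  have heq : P[t+1]'(hPb t ht) = Q[t]'(hQb t ht) := by
    have e1 := hP.get_diag (t+1) (hPb t ht)
    have e2 := hQ.get_diag t (hQb t ht)
    rw [hfval t ht, hgval t ht] at he
    have : (P[t+1]'(hPb t ht)).2 = (Q[t]'(hQb t ht)).2 := by omega
    exact Prod.ext he this
  rw [heq]
  exact memQ t ht

lemma ncard_prod' {α β : Type*} (s : Set α) (t : Set β) :
    (s ×ˢ t).ncard = s.ncard * t.ncard := by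
  rw [← Nat.card_coe_set_eq, ← Nat.card_coe_set_eq, ← Nat.card_coe_set_eq,
    Nat.card_congr (Equiv.Set.prod s t), Nat.card_prod]

lemma binom_natCast (x y : ℕ) : binom (x : ℤ) (y : ℤ) = (x.choose y : ℤ) := by
  unfold binom
  by_cases h : (y : ℤ) ≤ (x : ℤ)
  · rw [if_pos ⟨Int.natCast_nonneg y, h⟩]
    simp
  · rw [if_neg (by tauto)]
    have : x < y := by omega
    rw [Nat.choose_eq_zero_of_lt this]
    simp

theorem nonintersecting_pair_count (m n i j : ℕ)
    (hi1 : 1 ≤ i) (him : i ≤ m) (hj1 : 1 ≤ j) (hjn : j ≤ n) :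
    ({PQ : List (ℕ × ℕ) × List (ℕ × ℕ) |
        IsPath 1 1 i n PQ.1 ∧ IsPath 2 1 m j PQ.2 ∧
        ∀ v ∈ PQ.1, v ∉ PQ.2}.ncard : ℤ) =
      (Matrix.of ![![binom ((i : ℤ) + n - 2) ((i : ℤ) - 1), binom ((m : ℤ) + j - 2) ((m : ℤ) - 1)],
                    ![binom ((i : ℤ) + n - 3) ((i : ℤ) - 2), binom ((m : ℤ) + j - 3) ((m : ℤ) - 2)]]).det := by
  have hn1 : 1 ≤ n := le_trans hj1 hjn
  set Sni : Set (List (ℕ × ℕ) × List (ℕ × ℕ)) :=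
    {PQ | IsPath 1 1 i n PQ.1 ∧ IsPath 2 1 m j PQ.2 ∧ ∀ v ∈ PQ.1, v ∉ PQ.2} with hSni
  set Sint : Set (List (ℕ × ℕ) × List (ℕ × ℕ)) :=
    {PQ | IsPath 1 1 i n PQ.1 ∧ IsPath 2 1 m j PQ.2 ∧ ∃ v ∈ PQ.1, v ∈ PQ.2} with hSint
  have hSall : pathSet 1 1 i n ×ˢ pathSet 2 1 m j = Sni ∪ Sint := by
    ext PQ
    simp only [Set.mem_prod, Set.mem_union, hSni, hSint, Set.mem_setOf_eq, pathSet]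
    by_cases h : ∃ v ∈ PQ.1, v ∈ PQ.2
    · tauto
    · push_neg at h
      tauto
  have hfin : (pathSet 1 1 i n ×ˢ pathSet 2 1 m j).Finite :=
    (pathSet_finite 1 1 i n).prod (pathSet_finite 2 1 m j)
  have hfinNi : Sni.Finite := hfin.subset (by rw [hSall]; exact Set.subset_union_left)
  have hfinInt : Sint.Finite := hfin.subset (by rw [hSall]; exact Set.subset_union_right)
  have hdisj : Disjoint Sni Sint := by
    rw [Set.disjoint_left]
    rintro ⟨P, Q⟩ h1 h2
    obtain ⟨v, hv1, hv2⟩ := h2.2.2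
    exact h1.2.2 v hv1 hv2
  have hcount : Sni.ncard + Sint.ncard = (pathSet 1 1 i n).ncard * (pathSet 2 1 m j).ncard := by
    rw [← ncard_prod', hSall, Set.ncard_union_eq hdisj hfinNi hfinInt]
  -- the bijection
  have himg : swapPair '' Sint = pathSet 1 1 m j ×ˢ pathSet 2 1 i n := by
    apply subset_antisymm
    · rintro _ ⟨⟨P, Q⟩, ⟨hP, hQ, hint⟩, rfl⟩
      obtain ⟨s1, s2, -, -⟩ := swapPair_spec hP hQ hint
      exact ⟨s1, s2⟩
    · rintro ⟨P', Q'⟩ ⟨hP', hQ'⟩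
      have hint' := crossing hP' hQ' him hjn
      obtain ⟨s1, s2, s3, s4⟩ := swapPair_spec hP' hQ' hint'
      refine ⟨swapPair (P', Q'), ⟨s1, s2, s3⟩, s4⟩
  have hinj : Set.InjOn swapPair Sint := by
    rintro ⟨P1, Q1⟩ h1 ⟨P2, Q2⟩ h2 heq
    have s1 := (swapPair_spec h1.1 h1.2.1 h1.2.2).2.2.2
    have s2 := (swapPair_spec h2.1 h2.2.1 h2.2.2).2.2.2
    rw [← s1, ← s2, heq]
  have hcount2 : Sint.ncard = (pathSet 1 1 m j).ncard * (pathSet 2 1 i n).ncard := by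
    rw [← ncard_prod', ← himg, Set.ncard_image_of_injOn hinj]
  -- values
  have hN1 : (pathSet 1 1 i n).ncard = (i + n - 2).choose (i - 1) := by
    rw [pathSet_ncard, if_pos ⟨hi1, hn1⟩]
    congr 1
    omega
  have hN2 : (pathSet 2 1 m j).ncard = if 2 ≤ m then (m + j - 3).choose (m - 2) else 0 := by
    rw [pathSet_ncard]
    by_cases h2m : 2 ≤ m
    · rw [if_pos ⟨h2m, hj1⟩, if_pos h2m]
      congr 1
      omega
    · rw [if_neg (by omega), if_neg h2m]
  have hN3 : (pathSet 1 1 m j).ncard = (m + j - 2).choose (m - 1) := by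
    rw [pathSet_ncard, if_pos ⟨le_trans hi1 him, hj1⟩]
    congr 1
    omega
  have hN4 : (pathSet 2 1 i n).ncard = if 2 ≤ i then (i + n - 3).choose (i - 2) else 0 := by
    rw [pathSet_ncard]
    by_cases h2i : 2 ≤ i
    · rw [if_pos ⟨h2i, hn1⟩, if_pos h2i]
      congr 1
      omega
    · rw [if_neg (by omega), if_neg h2i]
  -- determinant
  rw [Matrix.det_fin_two]
  simp only [Matrix.of_apply, Matrix.cons_val', Matrix.cons_val_zero, Matrix.empty_val',
    Matrix.cons_val_fin_one, Matrix.cons_val_one, Matrix.head_cons, Matrix.head_fin_const]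
  have hb1 : binom ((i : ℤ) + n - 2) ((i : ℤ) - 1) = ((i + n - 2).choose (i - 1) : ℤ) := by
    rw [show (i : ℤ) + n - 2 = ((i + n - 2 : ℕ) : ℤ) by push_cast; omega,
      show (i : ℤ) - 1 = ((i - 1 : ℕ) : ℤ) by push_cast; omega, binom_natCast]
  have hb3 : binom ((m : ℤ) + j - 2) ((m : ℤ) - 1) = ((m + j - 2).choose (m - 1) : ℤ) := by
    rw [show (m : ℤ) + j - 2 = ((m + j - 2 : ℕ) : ℤ) by push_cast; omega,
      show (m : ℤ) - 1 = ((m - 1 : ℕ) : ℤ) by push_cast; omega, binom_natCast]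
  have hb4 : binom ((i : ℤ) + n - 3) ((i : ℤ) - 2)
      = (if 2 ≤ i then ((i + n - 3).choose (i - 2) : ℤ) else 0) := by
    by_cases h2i : 2 ≤ i
    · rw [if_pos h2i,
        show (i : ℤ) + n - 3 = ((i + n - 3 : ℕ) : ℤ) by push_cast; omega,
        show (i : ℤ) - 2 = ((i - 2 : ℕ) : ℤ) by push_cast; omega, binom_natCast]
    · rw [if_neg h2i]
      unfold binom
      rw [if_neg (by omega)]
  have hb2 : binom ((m : ℤ) + j - 3) ((m : ℤ) - 2)
      = (if 2 ≤ m then ((m + j - 3).choose (m - 2) : ℤ) else 0) := by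
    by_cases h2m : 2 ≤ m
    · rw [if_pos h2m,
        show (m : ℤ) + j - 3 = ((m + j - 3 : ℕ) : ℤ) by push_cast; omega,
        show (m : ℤ) - 2 = ((m - 2 : ℕ) : ℤ) by push_cast; omega, binom_natCast]
    · rw [if_neg h2m]
      unfold binom
      rw [if_neg (by omega)]
  rw [hb1, hb2, hb3, hb4]
  rw [hN1, hN2] at hcount
  rw [hN3, hN4] at hcount2
  have hc1 := congrArg (Nat.cast : ℕ → ℤ) hcount
  have hc2 := congrArg (Nat.cast : ℕ → ℤ) hcount2
  by_cases h2m : 2 ≤ m <;> by_cases h2i : 2 ≤ i <;>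
    simp only [if_pos, if_neg, h2m, h2i, if_true, if_false] at hc1 hc2 ⊢ <;>
    push_cast at hc1 hc2 ⊢ <;> linarith
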